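/- Let G be a finite connected graph, let v be a vertex with neighbor set A, and let w be a vertex with graph distance d(w,v) = 2. Let μ_w denote the distribution of the simple random walk started at w after 3 steps, and let P denote the probability that the simple random walk started at w is at v after exactly 2 steps. Then the exact identity H_{wv} = 3 + Σ_{a∈V} μ_w(a) H_{av} + P · (−1 − (1/|A|) Σ_{a∈A} H_{av}) holds; moreover the correction factor equals −1 − (1/|A|) Σ_{a∈A} H_{av} = −2|E|/deg(v). -/

import Mathlib

open MeasureTheory Filter Matrix

noncomputable section

/-- The simple graph on `Fin n` determined by a Boolean labelling of unordered pairs of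
vertices: `u` and `w` are adjacent iff `u ≠ w` and the pair `{u, w}` is labelled `true`. -/
def graphOf (n : ℕ) (ω : Sym2 (Fin n) → Bool) : SimpleGraph (Fin n) where
  Adj u w := u ≠ w ∧ ω s(u, w) = true
  symm := by
    constructor
    intro u w h
    refine ⟨h.1.symm, ?_⟩
    rw [Sym2.eq_swap]
    exact h.2
  loopless := by
    constructor
    intro u h
    exact h.1 rfl

instance (n : ℕ) (ω : Sym2 (Fin n) → Bool) : DecidableRel (graphOf n ω).Adj :=
  fun _ _ => instDecidableAnd

/-- Transition matrix of the simple random walk on a finite graph: from `u`, move to a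
uniformly random neighbor of `u`. -/
def transM {V : Type*} [Fintype V] [DecidableEq V] (G : SimpleGraph V) [DecidableRel G.Adj] :
    Matrix V V ℝ :=
  Matrix.of fun u w => if G.Adj u w then ((G.degree u : ℝ))⁻¹ else 0

/-- Transition matrix with all transitions into `v` removed (the walk killed at `v`). -/
def killedM {V : Type*} [Fintype V] [DecidableEq V] (G : SimpleGraph V) [DecidableRel G.Adj]
    (v : V) : Matrix V V ℝ :=
  Matrix.of fun u w => if w = v then 0 else transM G u w

/-- Expected hitting time `H_{wv}` of `v` for the simple random walk started at `w`,
defined via `H_{wv} = Σ_{t ≥ 0} P(T > t)` where `T` is the first hitting time of `v`;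
the survival probability `P(T > t)` equals `((killedM G v)^t 𝟙)_w`.  By convention
`H_{vv} = 0`. -/
def hit {V : Type*} [Fintype V] [DecidableEq V] (G : SimpleGraph V) [DecidableRel G.Adj]
    (w v : V) : ℝ :=
  if w = v then 0 else ∑' t : ℕ, ((killedM G v ^ t) *ᵥ fun _ => (1 : ℝ)) w

/-- The stationary distribution `π(w) = deg(w) / (2|E|)` of the simple random walk. -/
def statDist {V : Type*} [Fintype V] [DecidableEq V] (G : SimpleGraph V) [DecidableRel G.Adj]
    (w : V) : ℝ :=
  (G.degree w : ℝ) / (2 * (G.edgeFinset.card : ℝ))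

/-- The Erdős–Rényi measure `G(n,p)`: each unordered pair of vertices is (independently)
labelled `true` with probability `p`. -/
def erMeasure (n : ℕ) (p : ℝ) (hp : p ≤ 1) : Measure (Sym2 (Fin n) → Bool) :=
  Measure.pi fun _ =>
    (PMF.bernoulli (Real.toNNReal p) (by simpa using hp)).toMeasure

end

set_option linter.unusedSectionVars false
noncomputable section Aux
namespace RW
variable {V : Type*} [Fintype V] [DecidableEq V] (G : SimpleGraph V) [DecidableRel G.Adj] (v : V)

/-- survival probability -/
def g (t : ℕ) (u : V) : ℝ := ((killedM G v ^ t) *ᵥ fun _ => (1 : ℝ)) u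

variable {G v}

lemma trans_nonneg (u a : V) : 0 ≤ transM G u a := by
  unfold transM; simp only [Matrix.of_apply]
  split <;> positivity

lemma killed_nonneg (u a : V) : 0 ≤ killedM G v u a := by
  unfold killedM; simp only [Matrix.of_apply]
  split
  · exact le_rfl
  · exact trans_nonneg u a

lemma killed_le_trans (u a : V) : killedM G v u a ≤ transM G u a := by
  unfold killedM; simp only [Matrix.of_apply]
  split
  · exact trans_nonneg u a
  · exact le_rfl

lemma trans_rowsum (hdeg : ∀ x, 0 < G.degree x) (u : V) : ∑ a, transM G u a = 1 := by
  unfold transM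
  simp only [Matrix.of_apply]
  rw [← Finset.sum_filter, ← SimpleGraph.neighborFinset_eq_filter, Finset.sum_const,
    SimpleGraph.card_neighborFinset_eq_degree, nsmul_eq_mul]
  exact mul_inv_cancel₀ (by exact_mod_cast (hdeg u).ne')

lemma killed_rowsum (hdeg : ∀ x, 0 < G.degree x) (u : V) :
    ∑ a, killedM G v u a = 1 - transM G u v := by
  have : ∀ a, killedM G v u a = transM G u a - (if a = v then transM G u a else 0) := by
    intro a; unfold killedM; simp only [Matrix.of_apply]; split <;> simp_all
  rw [Finset.sum_congr rfl fun a _ => this a, Finset.sum_sub_distrib,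
    Finset.sum_ite_eq' Finset.univ v (fun a => transM G u a), trans_rowsum hdeg]
  simp

lemma killed_rowsum_le (hdeg : ∀ x, 0 < G.degree x) (u : V) :
    ∑ a, killedM G v u a ≤ 1 := by
  rw [killed_rowsum hdeg]
  have := trans_nonneg (G := G) u v
  linarith


lemma g_zero (u : V) : g G v 0 u = 1 := by
  simp [g, Matrix.one_mulVec]

lemma g_succ (t : ℕ) (u : V) : g G v (t + 1) u = ∑ a, killedM G v u a * g G v t a := by
  unfold g
  rw [pow_succ', ← Matrix.mulVec_mulVec]
  simp [Matrix.mulVec, dotProduct]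

lemma pow_entry_nonneg (n : ℕ) (u a : V) : 0 ≤ (killedM G v ^ n) u a := by
  induction n generalizing u a with
  | zero => simp [Matrix.one_apply]; split <;> norm_num
  | succ n ih =>
    rw [pow_succ', Matrix.mul_apply]
    exact Finset.sum_nonneg fun b _ => mul_nonneg (killed_nonneg u b) (ih b a)

lemma g_add (s t : ℕ) (u : V) : g G v (s + t) u = ∑ a, (killedM G v ^ s) u a * g G v t a := by
  unfold g
  rw [pow_add, ← Matrix.mulVec_mulVec]
  simp [Matrix.mulVec, dotProduct]

lemma g_nonneg (t : ℕ) (u : V) : 0 ≤ g G v t u := by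
  unfold g
  simp only [Matrix.mulVec, dotProduct]
  exact Finset.sum_nonneg fun a _ => mul_nonneg (pow_entry_nonneg t u a) zero_le_one

lemma g_le_one (hdeg : ∀ x, 0 < G.degree x) (t : ℕ) (u : V) : g G v t u ≤ 1 := by
  induction t generalizing u with
  | zero => simp [g_zero]
  | succ t ih =>
    rw [g_succ]
    calc ∑ a, killedM G v u a * g G v t a ≤ ∑ a, killedM G v u a * 1 :=
          Finset.sum_le_sum fun a _ => mul_le_mul_of_nonneg_left (ih a) (killed_nonneg u a)
      _ ≤ 1 := by simpa using killed_rowsum_le (v := v) hdeg u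

lemma g_anti (hdeg : ∀ x, 0 < G.degree x) {s t : ℕ} (h : s ≤ t) (u : V) :
    g G v t u ≤ g G v s u := by
  induction t with
  | zero => simp_all
  | succ t ih =>
    rcases Nat.lt_or_ge s (t+1) with hs | hs
    · have h1 : g G v (t+1) u ≤ g G v t u := by
        have key : ∀ n x, g G v (n+1) x ≤ g G v n x := by
          intro n
          induction n with
          | zero =>
            intro x
            rw [g_succ, g_zero]
            calc ∑ a, killedM G v x a * g G v 0 a = ∑ a, killedM G v x a := by
                  simp [g_zero]
              _ ≤ 1 := killed_rowsum_le hdeg x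
          | succ n ihn =>
            intro x
            rw [g_succ, g_succ]
            exact Finset.sum_le_sum fun a _ =>
              mul_le_mul_of_nonneg_left (ihn a) (killed_nonneg x a)
        exact key t u
      exact h1.trans (ih (Nat.lt_succ_iff.mp hs) )
    · have : s = t + 1 := le_antisymm h hs
      simp [this]


lemma exists_adj_dist (hG : G.Connected) {u : V} {n : ℕ} (h : G.dist u v = n + 1) :
    ∃ u', G.Adj u u' ∧ G.dist u' v = n := by
  obtain ⟨p, hp⟩ := hG.exists_walk_length_eq_dist u v
  cases p with
  | nil => rw [h] at hp; simp at hp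
  | @cons _ b _ hadj q =>
    refine ⟨b, hadj, ?_⟩
    have h1 : G.dist b v ≤ n := by
      have := G.dist_le q
      simp [SimpleGraph.Walk.length_cons, h] at hp
      omega
    have h2 : n ≤ G.dist b v := by
      have ht := hG.dist_triangle (u := u) (v := b) (w := v)
      have hub : G.dist u b ≤ 1 := by
        have := G.dist_le (SimpleGraph.Walk.cons hadj SimpleGraph.Walk.nil)
        simpa using this
      omega
    omega

lemma trans_pos (hdeg : ∀ x, 0 < G.degree x) {u a : V} (h : G.Adj u a) :
    0 < transM G u a := by
  unfold transM
  simp only [Matrix.of_apply, if_pos h]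
  have : (0:ℝ) < (G.degree u : ℝ) := by exact_mod_cast hdeg u
  positivity

lemma g_dist_lt (hG : G.Connected) (hdeg : ∀ x, 0 < G.degree x) :
    ∀ n, ∀ u, u ≠ v → G.dist u v = n → g G v n u < 1 := by
  intro n
  induction n with
  | zero => intro u hu h; exact absurd (hG.dist_eq_zero_iff.mp h) hu
  | succ n ih =>
    intro u hu h
    obtain ⟨u', hadj, hd'⟩ := exists_adj_dist hG h
    rw [g_succ]
    by_cases hv : u' = v
    · have hadj' : G.Adj u v := hv ▸ hadj
      have hn : n = 0 := by rw [hv] at hd'; simp [SimpleGraph.dist_self] at hd'; omega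
      subst hn
      have hpos : 0 < transM G u v := trans_pos hdeg hadj'
      calc ∑ a, killedM G v u a * g G v 0 a = ∑ a, killedM G v u a := by simp [g_zero]
        _ = 1 - transM G u v := killed_rowsum hdeg u
        _ < 1 := by linarith
    · have hlt : g G v n u' < 1 := ih u' hv hd'
      have hKeq : killedM G v u u' = transM G u u' := by
        unfold killedM; simp [hv]
      have hKpos : 0 < killedM G v u u' := hKeq ▸ trans_pos hdeg hadj
      have hstrict : ∑ a, killedM G v u a * g G v n a < ∑ a, killedM G v u a := by
        apply Finset.sum_lt_sum
        · intro a _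
          calc killedM G v u a * g G v n a ≤ killedM G v u a * 1 :=
                mul_le_mul_of_nonneg_left (g_le_one hdeg n a) (killed_nonneg u a)
            _ = killedM G v u a := mul_one _
        · exact ⟨u', Finset.mem_univ u', by
            have := mul_lt_mul_of_pos_left hlt hKpos
            simpa using this⟩
      exact hstrict.trans_le (killed_rowsum_le hdeg u)


lemma g_big_lt (hG : G.Connected) (hdeg : ∀ x, 0 < G.degree x) (u : V) :
    g G v ((Finset.univ.sup fun x => G.dist x v) + 1) u < 1 := by
  set D := Finset.univ.sup fun x => G.dist x v with hD
  by_cases hu : u = v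
  · rw [hu]
    obtain ⟨a, ha⟩ := (G.degree_pos_iff_exists_adj v).mp (hdeg v)
    have hav : a ≠ v := fun h => G.loopless.irrefl v (h ▸ ha)
    have h1 : g G v D a < 1 := by
      have h2 : g G v D a ≤ g G v (G.dist a v) a :=
        g_anti hdeg (Finset.le_sup (Finset.mem_univ a)) a
      exact h2.trans_lt (g_dist_lt hG hdeg _ a hav rfl)
    rw [g_succ]
    have hKeq : killedM G v v a = transM G v a := by unfold killedM; simp [hav]
    have hKpos : 0 < killedM G v v a := hKeq ▸ trans_pos hdeg ha
    have hstrict : ∑ b, killedM G v v b * g G v D b < ∑ b, killedM G v v b := by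
      apply Finset.sum_lt_sum
      · intro b _
        calc killedM G v v b * g G v D b ≤ killedM G v v b * 1 :=
              mul_le_mul_of_nonneg_left (g_le_one hdeg D b) (killed_nonneg v b)
          _ = killedM G v v b := mul_one _
      · exact ⟨a, Finset.mem_univ a, by
          have := mul_lt_mul_of_pos_left h1 hKpos
          simpa using this⟩
    exact hstrict.trans_le (killed_rowsum_le hdeg v)
  · have h2 : g G v (G.dist u v) u < 1 := g_dist_lt hG hdeg _ u hu rfl
    have h3 : g G v (D+1) u ≤ g G v (G.dist u v) u :=
      g_anti hdeg ((Finset.le_sup (Finset.mem_univ u)).trans (Nat.le_succ D)) u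
    exact h3.trans_lt h2

lemma summable_g (hG : G.Connected) (hdeg : ∀ x, 0 < G.degree x) (u : V) :
    Summable fun t => g G v t u := by
  have hne : Nonempty V := ⟨v⟩
  set N := (Finset.univ.sup fun x => G.dist x v) + 1 with hN
  have hN0 : 0 < N := Nat.succ_pos _
  set c := Finset.univ.sup' Finset.univ_nonempty (fun x => g G v N x) with hc
  have hc1 : c < 1 := (Finset.sup'_lt_iff _).mpr fun x _ => g_big_lt hG hdeg x
  have hc0 : (0:ℝ) ≤ c := le_trans (g_nonneg N v) (Finset.le_sup' _ (Finset.mem_univ v))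
  have hgc : ∀ x, g G v N x ≤ c := fun x => Finset.le_sup' _ (Finset.mem_univ x)
  have hgeom : ∀ m x, g G v (m * N) x ≤ c ^ m := by
    intro m
    induction m with
    | zero => intro x; simpa [g_zero] using le_refl (1:ℝ)
    | succ m ih =>
      intro x
      have hmn : (m+1) * N = N + m * N := by ring
      rw [hmn, g_add]
      calc ∑ a, (killedM G v ^ N) x a * g G v (m*N) a
          ≤ ∑ a, (killedM G v ^ N) x a * c ^ m :=
            Finset.sum_le_sum fun a _ =>
              mul_le_mul_of_nonneg_left (ih a) (pow_entry_nonneg N x a)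
        _ = (∑ a, (killedM G v ^ N) x a) * c ^ m := by rw [Finset.sum_mul]
        _ = g G v N x * c ^ m := by
            congr 1
            unfold g
            simp [Matrix.mulVec, dotProduct]
        _ ≤ c * c ^ m := mul_le_mul_of_nonneg_right (hgc x) (pow_nonneg hc0 m)
        _ = c ^ (m+1) := (pow_succ' c m).symm
  have hbound : ∀ t, g G v t u ≤ c ^ (t / N) := by
    intro t
    have h1 : g G v t u ≤ g G v (t / N * N) u :=
      g_anti hdeg (Nat.div_mul_le_self t N) u
    exact h1.trans (hgeom _ u)
  set c' := max c 2⁻¹ with hc'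
  have hc'0 : (0:ℝ) < c' := lt_max_of_lt_right (by norm_num)
  have hc'1 : c' < 1 := max_lt hc1 (by norm_num)
  set r := c' ^ ((N:ℝ)⁻¹) with hr
  have hr0 : 0 < r := Real.rpow_pos_of_pos hc'0 _
  have hr1 : r < 1 := Real.rpow_lt_one hc'0.le hc'1 (by positivity)
  have hpow : ∀ k : ℕ, r ^ k = c' ^ (((N:ℝ)⁻¹ * k) : ℝ) := by
    intro k
    rw [hr, ← Real.rpow_natCast (c' ^ ((N:ℝ)⁻¹)) k, ← Real.rpow_mul hc'0.le]
  have key : ∀ t : ℕ, c ^ (t / N) ≤ r⁻¹ ^ N * r ^ t := by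
    intro t
    have h1 : c ^ (t/N) ≤ c' ^ (t/N) := pow_le_pow_left₀ hc0 (le_max_left _ _) _
    have hNne : ((N:ℝ)) ≠ 0 := by positivity
    have h2 : c' ^ (t/N) = r ^ (N * (t/N)) := by
      rw [hpow]
      rw [← Real.rpow_natCast c' (t/N)]
      congr 1
      push_cast
      field_simp
    have h3 : r ^ (N * (t/N)) * r ^ N ≤ r ^ t := by
      rw [← pow_add]
      apply pow_le_pow_of_le_one hr0.le hr1.le
      have hdm := Nat.div_add_mod t N
      have hmod := Nat.mod_lt t hN0
      omega
    have h4 : r ^ (N*(t/N)) ≤ r⁻¹ ^ N * r ^ t := by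
      have h5 : r ^ (N*(t/N)) ≤ r ^ t / r ^ N := (le_div_iff₀ (pow_pos hr0 N)).mpr h3
      calc r ^ (N*(t/N)) ≤ r ^ t / r ^ N := h5
        _ = r⁻¹ ^ N * r ^ t := by rw [inv_pow]; ring
    calc c ^ (t/N) ≤ c' ^ (t/N) := h1
      _ = r ^ (N * (t/N)) := h2
      _ ≤ r⁻¹ ^ N * r ^ t := h4
  refine Summable.of_nonneg_of_le (fun t => g_nonneg t u)
    (fun t => (hbound t).trans (key t)) ?_
  exact (summable_geometric_of_lt_one hr0.le hr1).mul_left _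


lemma hit_rec (hG : G.Connected) (hdeg : ∀ x, 0 < G.degree x) {u : V} (hu : u ≠ v) :
    hit G u v = 1 + ∑ a, transM G u a * hit G a v := by
  have hsum : ∀ x, Summable fun t => g G v t x := summable_g hG hdeg
  have h0 : hit G u v = ∑' t, g G v t u := by rw [hit, if_neg hu]; rfl
  rw [h0, Summable.tsum_eq_zero_add (hsum u), g_zero]
  have h1 : ∑' t, g G v (t+1) u = ∑ a, killedM G v u a * ∑' t, g G v t a := by
    calc ∑' t, g G v (t+1) u = ∑' t, ∑ a, killedM G v u a * g G v t a := by
          simp only [g_succ]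
      _ = ∑ a, ∑' t, killedM G v u a * g G v t a :=
          Summable.tsum_finsetSum fun a _ => (hsum a).mul_left _
      _ = ∑ a, killedM G v u a * ∑' t, g G v t a :=
          Finset.sum_congr rfl fun a _ => tsum_mul_left
  rw [h1]
  congr 1
  apply Finset.sum_congr rfl
  intro a _
  by_cases hav : a = v
  · rw [hav]
    have hK : killedM G v u v = 0 := by unfold killedM; simp
    have hH : hit G v v = 0 := by rw [hit, if_pos rfl]
    rw [hK, hH, zero_mul, mul_zero]
  · have hK : killedM G v u a = transM G u a := by unfold killedM; simp [hav]
    rw [hK, hit, if_neg hav]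
    rfl

/-- return-time quantity -/
def retTime (G : SimpleGraph V) [DecidableRel G.Adj] (v : V) : ℝ :=
  1 + ∑ a, transM G v a * hit G a v

lemma hit_master (hG : G.Connected) (hdeg : ∀ x, 0 < G.degree x) (u : V) :
    hit G u v = 1 + (∑ a, transM G u a * hit G a v) -
      (if u = v then retTime G v else 0) := by
  by_cases hu : u = v
  · rw [hu, if_pos rfl, hit, if_pos rfl, retTime]
    ring
  · rw [if_neg hu, hit_rec hG hdeg hu]
    ring

lemma deg_mul_trans (hdeg : ∀ x, 0 < G.degree x) (a : V) :
    ∑ u, (G.degree u : ℝ) * transM G u a = (G.degree a : ℝ) := by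
  unfold transM
  simp only [Matrix.of_apply]
  have h1 : ∀ u, (G.degree u : ℝ) * (if G.Adj u a then ((G.degree u : ℝ))⁻¹ else 0)
      = if G.Adj u a then 1 else 0 := by
    intro u
    split
    · exact mul_inv_cancel₀ (by exact_mod_cast (hdeg u).ne')
    · exact mul_zero _
  rw [Finset.sum_congr rfl fun u _ => h1 u, Finset.sum_boole]
  have h2 : Finset.univ.filter (fun u => G.Adj u a) = G.neighborFinset a := by
    ext u
    simp [SimpleGraph.mem_neighborFinset, G.adj_comm]
  rw [h2, SimpleGraph.card_neighborFinset_eq_degree]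

lemma retTime_eq (hG : G.Connected) (hdeg : ∀ x, 0 < G.degree x) :
    retTime G v = 2 * (G.edgeFinset.card : ℝ) / (G.degree v : ℝ) := by
  have key : ∑ u, (G.degree u : ℝ) * hit G u v
      = (∑ u, (G.degree u : ℝ)) + (∑ a, (G.degree a : ℝ) * hit G a v)
        - (G.degree v : ℝ) * retTime G v := by
    calc ∑ u, (G.degree u : ℝ) * hit G u v
        = ∑ u, ((G.degree u : ℝ) + (∑ a, (G.degree u : ℝ) * (transM G u a * hit G a v))
            - (G.degree u : ℝ) * (if u = v then retTime G v else 0)) := by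
          apply Finset.sum_congr rfl
          intro u _
          rw [hit_master hG hdeg u, mul_sub, mul_add, mul_one, Finset.mul_sum]
      _ = (∑ u, (G.degree u : ℝ))
          + (∑ u, ∑ a, (G.degree u : ℝ) * (transM G u a * hit G a v))
          - ∑ u, (G.degree u : ℝ) * (if u = v then retTime G v else 0) := by
          rw [Finset.sum_sub_distrib, Finset.sum_add_distrib]
      _ = (∑ u, (G.degree u : ℝ)) + (∑ a, (G.degree a : ℝ) * hit G a v)
          - (G.degree v : ℝ) * retTime G v := by
          congr 1
          · congr 1
            rw [Finset.sum_comm]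
            apply Finset.sum_congr rfl
            intro a _
            calc ∑ u, (G.degree u : ℝ) * (transM G u a * hit G a v)
                = (∑ u, (G.degree u : ℝ) * transM G u a) * hit G a v := by
                  rw [Finset.sum_mul]
                  apply Finset.sum_congr rfl
                  intro u _
                  ring
              _ = (G.degree a : ℝ) * hit G a v := by rw [deg_mul_trans hdeg]
          · have : ∀ u, (G.degree u : ℝ) * (if u = v then retTime G v else 0)
                = if u = v then (G.degree u : ℝ) * retTime G v else 0 := by
              intro u; split <;> simp
            rw [Finset.sum_congr rfl fun u _ => this u,
              Finset.sum_ite_eq' Finset.univ v (fun u => (G.degree u : ℝ) * retTime G v)]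
            simp
  have hdv : (0:ℝ) < (G.degree v : ℝ) := by exact_mod_cast hdeg v
  have hsumdeg : (∑ u, (G.degree u : ℝ)) = 2 * (G.edgeFinset.card : ℝ) := by
    rw [← Nat.cast_sum]
    exact_mod_cast congrArg (Nat.cast : ℕ → ℝ) G.sum_degrees_eq_twice_card_edges
  have h2 : (G.degree v : ℝ) * retTime G v = 2 * (G.edgeFinset.card : ℝ) := by
    have := key
    rw [hsumdeg] at this
    linarith
  field_simp [hdv.ne'] at h2 ⊢
  linarith


lemma trans_pow_rowsum (hdeg : ∀ x, 0 < G.degree x) :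
    ∀ (n : ℕ) (u : V), ∑ a, (transM G ^ n) u a = 1 := by
  intro n
  induction n with
  | zero => intro u; simp [Matrix.one_apply]
  | succ n ih =>
    intro u
    calc ∑ a, (transM G ^ (n+1)) u a = ∑ a, ∑ b, transM G u b * (transM G ^ n) b a := by
          simp only [pow_succ', Matrix.mul_apply]
      _ = ∑ b, transM G u b * ∑ a, (transM G ^ n) b a := by
          rw [Finset.sum_comm]
          exact Finset.sum_congr rfl fun b _ => (Finset.mul_sum _ _ _).symm
      _ = 1 := by
          simp only [ih, mul_one]
          exact trans_rowsum hdeg u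

lemma expand (hG : G.Connected) (hdeg : ∀ x, 0 < G.degree x) (n : ℕ) (u : V) :
    ∑ a, (transM G ^ n) u a * hit G a v
      = 1 + (∑ b, (transM G ^ (n+1)) u b * hit G b v)
        - (transM G ^ n) u v * retTime G v := by
  calc ∑ a, (transM G ^ n) u a * hit G a v
      = ∑ a, (transM G ^ n) u a *
          (1 + (∑ b, transM G a b * hit G b v) - (if a = v then retTime G v else 0)) :=
        Finset.sum_congr rfl fun a _ => by rw [← hit_master hG hdeg a]
    _ = (∑ a, (transM G ^ n) u a)
        + (∑ a, (transM G ^ n) u a * ∑ b, transM G a b * hit G b v)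
        - ∑ a, (transM G ^ n) u a * (if a = v then retTime G v else 0) := by
        simp only [mul_sub, mul_add, mul_one]
        rw [Finset.sum_sub_distrib, Finset.sum_add_distrib]
    _ = 1 + (∑ b, (transM G ^ (n+1)) u b * hit G b v)
        - (transM G ^ n) u v * retTime G v := by
        congr 1
        · congr 1
          · exact trans_pow_rowsum hdeg n u
          · calc ∑ a, (transM G ^ n) u a * ∑ b, transM G a b * hit G b v
                = ∑ a, ∑ b, (transM G ^ n) u a * (transM G a b * hit G b v) :=
                  Finset.sum_congr rfl fun a _ => Finset.mul_sum _ _ _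
              _ = ∑ b, (∑ a, (transM G ^ n) u a * transM G a b) * hit G b v := by
                  rw [Finset.sum_comm]
                  refine Finset.sum_congr rfl fun b _ => ?_
                  rw [Finset.sum_mul]
                  exact Finset.sum_congr rfl fun a _ => by ring
              _ = ∑ b, (transM G ^ (n+1)) u b * hit G b v := by
                  refine Finset.sum_congr rfl fun b _ => ?_
                  congr 1
        · have h : ∀ a, (transM G ^ n) u a * (if a = v then retTime G v else 0)
              = if a = v then (transM G ^ n) u a * retTime G v else 0 := by
            intro a; split <;> simp
          rw [Finset.sum_congr rfl fun a _ => h a,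
            Finset.sum_ite_eq' Finset.univ v (fun a => (transM G ^ n) u a * retTime G v)]
          simp

end RW
end Aux


/-- Let `G` be a finite connected graph, `v` a vertex with neighbor set `A`, and `w` a
vertex at graph distance `2` from `v`.  With `μ_w` the distribution of the simple random
walk started at `w` after `3` steps and `P` the probability that the walk started at `w`
is at `v` after exactly `2` steps, the exact identity
`H_{wv} = 3 + Σ_a μ_w(a) H_{av} + P·(−1 − (1/|A|) Σ_{a∈A} H_{av})` holds; moreover the
correction factor equals `−1 − (1/|A|) Σ_{a∈A} H_{av} = −2|E|/deg(v)`. -/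
theorem statement14 {V : Type*} [Fintype V] [DecidableEq V] (G : SimpleGraph V)
    [DecidableRel G.Adj] (hG : G.Connected) (v w : V) (hd : G.dist w v = 2) :
    hit G w v = 3 + (∑ a : V, (transM G ^ 3) w a * hit G a v) +
        (transM G ^ 2) w v *
          (-1 - (1 / ((G.neighborFinset v).card : ℝ)) * ∑ a ∈ G.neighborFinset v, hit G a v) ∧
      -1 - (1 / ((G.neighborFinset v).card : ℝ)) * (∑ a ∈ G.neighborFinset v, hit G a v) =
        -(2 * (G.edgeFinset.card : ℝ) / (G.degree v : ℝ)) := by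
  have hwv : w ≠ v := by
    intro h
    rw [h, SimpleGraph.dist_self] at hd
    omega
  have hnt : Nontrivial V := ⟨⟨w, v, hwv⟩⟩
  have hdeg : ∀ x, 0 < G.degree x := by
    intro x
    rw [G.degree_pos_iff_exists_adj]
    obtain ⟨y, hy⟩ := exists_ne x
    obtain ⟨p⟩ := hG.preconnected x y
    cases p with
    | nil => exact absurd rfl hy
    | cons h q => exact ⟨_, h⟩
  have hnadj : ¬ G.Adj w v := by
    intro h
    rw [← G.dist_eq_one_iff_adj] at h
    omega
  have hTwv : transM G w v = 0 := by unfold transM; simp [hnadj]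
  have e1 : hit G w v = 1 + ∑ a, (transM G ^ 1) w a * hit G a v := by
    rw [RW.hit_rec hG hdeg hwv]
    simp [pow_one]
  have e2 : ∑ a, (transM G ^ 1) w a * hit G a v
      = 1 + (∑ b, (transM G ^ 2) w b * hit G b v)
        - (transM G ^ 1) w v * RW.retTime G v := by
    simpa using RW.expand (v := v) hG hdeg 1 w
  have e3 : ∑ a, (transM G ^ 2) w a * hit G a v
      = 1 + (∑ b, (transM G ^ 3) w b * hit G b v)
        - (transM G ^ 2) w v * RW.retTime G v := by
    simpa using RW.expand (v := v) hG hdeg 2 w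
  have hT1 : (transM G ^ 1) w v = 0 := by rw [pow_one]; exact hTwv
  have efac : -1 - (1 / ((G.neighborFinset v).card : ℝ)) * (∑ a ∈ G.neighborFinset v, hit G a v)
      = -(RW.retTime G v) := by
    unfold RW.retTime
    have h : ∑ a, transM G v a * hit G a v
        = ((G.degree v : ℝ))⁻¹ * ∑ a ∈ G.neighborFinset v, hit G a v := by
      unfold transM
      simp only [Matrix.of_apply, ite_mul, zero_mul]
      rw [← Finset.sum_filter, ← SimpleGraph.neighborFinset_eq_filter, Finset.mul_sum]
    rw [h, SimpleGraph.card_neighborFinset_eq_degree, one_div]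
    ring
  constructor
  · rw [e1, e2, hT1, e3, efac]
    ring
  · rw [efac, RW.retTime_eq hG hdeg]
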